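/- Let (x_n) be a summable sequence of positive real numbers such that the achievement set E(x_n) is a Cantorval. Then the uniqueness set U(x_n) is an infinite set. -/

import Mathlib

open Set Topology

noncomputable section

/-- The achievement set (set of subsums) of a series `∑ xₙ`. -/
def achSet (x : ℕ → ℝ) : Set ℝ := {t : ℝ | ∃ A : Set ℕ, t = ∑' n : A, x n}

/-- The uniqueness set: points having exactly one representation as a subsum. -/
def uniqSet (x : ℕ → ℝ) : Set ℝ := {t : ℝ | ∃! A : Set ℕ, t = ∑' n : A, x n}

/-- The Guthrie–Nymann sequence (0-indexed): `3/4, 2/4, 3/16, 2/16, …`,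
i.e. `y_{2n-1} = 3/4ⁿ`, `y_{2n} = 2/4ⁿ` in 1-indexed notation. -/
def gnSeq : ℕ → ℝ := fun n => if n % 2 = 0 then 3 / 4 ^ (n / 2 + 1) else 2 / 4 ^ (n / 2 + 1)

/-- A Cantorval is a subset of `ℝ` homeomorphic to the Guthrie–Nymann Cantorval
`E(y_n)` where `y_{2n-1} = 3/4ⁿ`, `y_{2n} = 2/4ⁿ`. -/
def IsCantorval (S : Set ℝ) : Prop := Nonempty (S ≃ₜ achSet gnSeq)


namespace UniqCantorval

variable {x : ℕ → ℝ}

lemma tsub (A : Set ℕ) (x : ℕ → ℝ) : ∑' k : A, x k = ∑' k, A.indicator x k :=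
  tsum_subtype A x

lemma sum_mono (hpos : ∀ n, 0 < x n) (hsum : Summable x) {A B : Set ℕ} (hAB : A ⊆ B) :
    ∑' k : A, x k ≤ ∑' k : B, x k := by
  rw [tsub, tsub]
  exact Summable.tsum_le_tsum
    (fun k => Set.indicator_le_indicator_of_subset hAB (fun n => (hpos n).le) k)
    (hsum.indicator A) (hsum.indicator B)

lemma sum_nonneg' (hpos : ∀ n, 0 < x n) (A : Set ℕ) : 0 ≤ ∑' k : A, x k :=
  tsum_nonneg (fun k => (hpos k.1).le)

lemma elem_le (hpos : ∀ n, 0 < x n) (hsum : Summable x) {A : Set ℕ} {k : ℕ} (hk : k ∈ A) :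
    x k ≤ ∑' k : A, x k := by
  rw [tsub]
  have h := Summable.le_tsum (hsum.indicator A) k
    (fun j _ => Set.indicator_nonneg (fun n _ => (hpos n).le) j)
  rwa [Set.indicator_of_mem hk] at h

lemma singleton_sum (x : ℕ → ℝ) (j : ℕ) : ∑' k : ({j} : Set ℕ), x k = x j := by
  rw [tsub]
  refine tsum_eq_single j (fun k hk => ?_) |>.trans (Set.indicator_of_mem rfl x)
  exact Set.indicator_of_notMem (by simpa using hk) x

lemma union_sum (hsum : Summable x) {A B : Set ℕ} (hd : Disjoint A B) :
    ∑' k : (A ∪ B : Set ℕ), x k = (∑' k : A, x k) + ∑' k : B, x k := by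
  rw [tsub, tsub, tsub, ← Summable.tsum_add (hsum.indicator A) (hsum.indicator B)]
  exact tsum_congr (fun k => by rw [Set.indicator_union_of_disjoint hd])

lemma insert_sum (hsum : Summable x) {B : Set ℕ} {j : ℕ} (hj : j ∉ B) :
    ∑' k : (insert j B : Set ℕ), x k = x j + ∑' k : B, x k := by
  have : (insert j B : Set ℕ) = {j} ∪ B := Set.insert_eq j B
  rw [this, union_sum hsum (Set.disjoint_singleton_left.mpr hj), singleton_sum]

lemma ssubset_lt (hpos : ∀ n, 0 < x n) (hsum : Summable x) {A B : Set ℕ}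
    (hBA : B ⊆ A) {j : ℕ} (hjA : j ∈ A) (hjB : j ∉ B) :
    (∑' k : B, x k) + x j ≤ ∑' k : A, x k := by
  have h1 : (insert j B : Set ℕ) ⊆ A := Set.insert_subset hjA hBA
  have := sum_mono hpos hsum h1
  rwa [insert_sum hsum hjB, add_comm] at this

lemma finite_big (hsum : Summable x) {γ : ℝ} (hγ : 0 < γ) : {k | γ ≤ x k}.Finite := by
  have h2 : ∀ᶠ k in Filter.cofinite, x k < γ := hsum.tendsto_cofinite_zero.eventually_lt_const hγ
  rw [Filter.eventually_cofinite] at h2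
  exact h2.subset (fun k hk => by simpa using hk)

lemma exists_small (hsum : Summable x) {v : ℝ} (hv : 0 < v) : ∃ k, x k < v :=
  (hsum.tendsto_atTop_zero.eventually_lt_const hv).exists



/-- Key lemma: no "blocking" below δ if there are no unique points in (0,δ). -/
lemma no_blocking (hpos : ∀ n, 0 < x n) (hsum : Summable x) {δ : ℝ}
    (hU : ∀ t, t ∈ uniqSet x → ¬ (0 < t ∧ t < δ)) {v : ℝ} (hv0 : 0 < v) (hvδ : v < δ) :
    v ≤ ∑' k : {k | x k < v}, x k := by
  by_contra hlt
  push_neg at hlt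
  set A : Set ℕ := {k | x k < v} with hA
  set t : ℝ := ∑' k : A, x k with ht
  obtain ⟨k0, hk0⟩ := exists_small hsum hv0
  have htpos : 0 < t := Summable.tsum_pos (hsum.subtype _) (fun i => (hpos i.1).le) ⟨k0, hk0⟩ (hpos k0)
  have huniq : t ∈ uniqSet x := by
    refine ⟨A, ht, ?_⟩
    rintro B hB
    have hBA : B ⊆ A := by
      intro k hk
      have := elem_le hpos hsum hk
      rw [← hB] at this
      exact lt_of_le_of_lt this hlt
    by_contra hne
    obtain ⟨j, hjA, hjB⟩ : ∃ j, j ∈ A ∧ j ∉ B := by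
      rcases Set.exists_of_ssubset ⟨hBA, fun h => hne (Set.Subset.antisymm hBA h)⟩ with ⟨j, hj1, hj2⟩
      exact ⟨j, hj1, hj2⟩
    have := ssubset_lt hpos hsum hBA hjA hjB
    rw [← hB, ← ht] at this
    linarith [hpos j]
  exact hU t huniq ⟨htpos, lt_trans hlt hvδ⟩

/-- Greedy filling with elements all ≤ γ. -/
lemma greedy (hpos : ∀ n, 0 < x n) (hsum : Summable x) (S : Set ℕ) {γ τ : ℝ}
    (hγ : 0 < γ) (hτ : 0 ≤ τ) (hmass : τ ≤ ∑' k : S, x k)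
    (hsmall : ∀ k ∈ S, x k ≤ γ) :
    ∃ A : Set ℕ, A ⊆ S ∧ (∑' k : A, x k) ∈ Set.Ioc (τ - γ) τ := by
  classical
  let s : ℕ → ℝ := fun n => Nat.rec 0
    (fun n sn => sn + if n ∈ S ∧ x n ≤ τ - sn then x n else 0) n
  have hs0 : s 0 = 0 := rfl
  have hsucc : ∀ n, s (n + 1) = s n + if n ∈ S ∧ x n ≤ τ - s n then x n else 0 := fun n => rfl
  set A : Set ℕ := {n | n ∈ S ∧ x n ≤ τ - s n} with hA
  have hAS : A ⊆ S := fun n hn => hn.1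
  have hstep : ∀ n, s (n + 1) = s n + A.indicator x n := by
    intro n
    rw [hsucc]
    by_cases h : n ∈ S ∧ x n ≤ τ - s n
    · rw [if_pos h, Set.indicator_of_mem (show n ∈ A from h)]
    · rw [if_neg h, Set.indicator_of_notMem (show n ∉ A from h)]
  have hpart : ∀ n, s n = ∑ i ∈ Finset.range n, A.indicator x i := by
    intro n
    induction n with
    | zero => simp [hs0]
    | succ n ih => rw [hstep, ih, Finset.sum_range_succ]
  have hsle : ∀ n, s n ≤ τ := by
    intro n
    induction n with
    | zero => rw [hs0]; exact hτ
    | succ n ih =>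
      rw [hsucc]
      by_cases h : n ∈ S ∧ x n ≤ τ - s n
      · rw [if_pos h]; linarith [h.2]
      · rw [if_neg h]; simpa using ih
  have hsummA : Summable (A.indicator x) := hsum.indicator A
  have hhs : HasSum (A.indicator x) (∑' k, A.indicator x k) := hsummA.hasSum
  have htend : Filter.Tendsto (fun n => ∑ i ∈ Finset.range n, A.indicator x i)
      Filter.atTop (nhds (∑' k, A.indicator x k)) := hhs.tendsto_sum_nat
  have htend' : Filter.Tendsto s Filter.atTop (nhds (∑' k, A.indicator x k)) := by
    have : s = fun n => ∑ i ∈ Finset.range n, A.indicator x i := funext hpart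
    rw [this]; exact htend
  set L : ℝ := ∑' k, A.indicator x k with hL
  have hLτ : L ≤ τ := le_of_tendsto' htend' hsle
  have hsL : ∀ n, s n ≤ L := by
    intro n
    rw [hpart]
    exact Summable.sum_le_tsum (Finset.range n)
      (fun i _ => Set.indicator_nonneg (fun m _ => (hpos m).le) i) hsummA
  have hAL : (∑' k : A, x k) = L := tsub A x
  by_cases hex : ∃ n ∈ S, n ∉ A
  · obtain ⟨n, hnS, hnA⟩ := hex
    have hx : ¬ x n ≤ τ - s n := fun h => hnA ⟨hnS, h⟩
    push_neg at hx
    refine ⟨A, hAS, ?_⟩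
    rw [hAL]
    refine ⟨?_, hLτ⟩
    have h1 : τ - x n < s n := by linarith
    have h2 := lt_of_lt_of_le h1 (hsL n)
    have hxγ := hsmall n hnS
    linarith
  · push_neg at hex
    have hAeq : A = S := Set.Subset.antisymm hAS hex
    refine ⟨A, hAS, ?_⟩
    rw [hAL]
    have hLS : (∑' k : S, x k) = L := hAeq ▸ hAL
    have hLt : L = τ := le_antisymm hLτ (hLS ▸ hmass)
    exact ⟨by rw [hLt]; linarith, le_of_eq hLt⟩

/-- Density of subsums, by induction on the number of "large" elements. -/
lemma density_aux (hpos : ∀ n, 0 < x n) (hsum : Summable x) {δ : ℝ}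
    (H : ∀ v, 0 < v → v < δ → v ≤ ∑' k : {k | x k < v}, x k) :
    ∀ (n : ℕ) (S : Set ℕ) (γ τ : ℝ) (T : Finset ℕ),
      S ⊆ {k | x k < δ} →
      (∀ j ∈ S, ∀ k, x k < δ → k ∉ S → x j ≤ x k) →
      0 < γ → 0 ≤ τ → τ ≤ ∑' k : S, x k →
      (∀ k, k ∈ T ↔ k ∈ S ∧ γ < x k) → T.card ≤ n →
      ∃ A : Set ℕ, A ⊆ S ∧ (∑' k : A, x k) ∈ Set.Ioc (τ - γ) τ := by
  intro n
  induction n with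
  | zero =>
    intro S γ τ T hSδ _hdom hγ hτ hmass hT hcard
    refine greedy hpos hsum S hγ hτ hmass (fun k hk => ?_)
    by_contra hgt
    push_neg at hgt
    have : k ∈ T := (hT k).mpr ⟨hk, hgt⟩
    have : T.Nonempty := ⟨k, this⟩
    rw [← Finset.card_pos] at this
    omega
  | succ n ih =>
    intro S γ τ T hSδ hdom hγ hτ hmass hT hcard
    by_cases hc : T.card ≤ n
    · exact ih S γ τ T hSδ hdom hγ hτ hmass hT hc
    have hTne : T.Nonempty := by
      rw [← Finset.card_pos]; omega
    obtain ⟨g, hgT, hgmax⟩ := T.exists_max_image x hTne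
    obtain ⟨hgS, hgγ⟩ := (hT g).mp hgT
    set S' : Set ℕ := S \ {g} with hS'
    set T' : Finset ℕ := T.erase g with hT'def
    have hT' : ∀ k, k ∈ T' ↔ k ∈ S' ∧ γ < x k := by
      intro k
      constructor
      · intro hk
        obtain ⟨hne, hkT⟩ := Finset.mem_erase.mp hk
        obtain ⟨hkS, hkγ⟩ := (hT k).mp hkT
        exact ⟨⟨hkS, by simpa using hne⟩, hkγ⟩
      · rintro ⟨⟨hkS, hne⟩, hkγ⟩
        exact Finset.mem_erase.mpr ⟨by simpa using hne, (hT k).mpr ⟨hkS, hkγ⟩⟩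
    have hcard' : T'.card ≤ n := by
      rw [hT'def, Finset.card_erase_of_mem hgT]; omega
    have hgS' : g ∉ S' := by simp [hS']
    have hins : insert g S' = S := by
      rw [hS']; exact Set.insert_diff_singleton.trans (by simp [Set.insert_eq_self.mpr hgS])
    have hmass_split : (∑' k : S, x k) = x g + ∑' k : S', x k := by
      rw [← hins]; exact insert_sum hsum hgS'
    have hS'δ : S' ⊆ {k | x k < δ} := fun k hk => hSδ hk.1
    have hdom' : ∀ j ∈ S', ∀ k, x k < δ → k ∉ S' → x j ≤ x k := by
      intro j hj k hkδ hk
      by_cases hkg : k = g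
      · subst hkg
        by_cases hjγ : γ < x j
        · exact hgmax j ((hT j).mpr ⟨hj.1, hjγ⟩)
        · push_neg at hjγ
          exact le_of_lt (lt_of_le_of_lt hjγ hgγ)
      · have hkS : k ∉ S := fun hkS => hk ⟨hkS, by simpa using hkg⟩
        exact hdom j hj.1 k hkδ hkS
    by_cases hle : x g ≤ τ
    · have h0 : (0:ℝ) ≤ τ - x g := by linarith
      have h1 : τ - x g ≤ ∑' k : S', x k := by
        rw [hmass_split] at hmass; linarith
      obtain ⟨A', hA'S, hA'⟩ := ih S' γ (τ - x g) T' hS'δ hdom' hγ h0 h1 hT' hcard'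
      refine ⟨insert g A', ?_, ?_⟩
      · rw [← hins]; exact Set.insert_subset_insert hA'S
      · have hgA' : g ∉ A' := fun h => hgS' (hA'S h)
        rw [insert_sum hsum hgA']
        obtain ⟨hlo, hhi⟩ := hA'
        constructor
        · linarith
        · linarith
    · push_neg at hle
      have hxgδ : x g < δ := hSδ hgS
      have hsub : {k | x k < x g} ⊆ S' := by
        intro k hk
        have hkδ : x k < δ := lt_trans hk hxgδ
        have hkS : k ∈ S := by
          by_contra hkS
          exact absurd (hdom g hgS k hkδ hkS) (not_le.mpr hk)
        refine ⟨hkS, fun he => ?_⟩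
        have hkg : k = g := Set.mem_singleton_iff.mp he
        rw [hkg] at hk
        exact absurd (show x g < x g from hk) (lt_irrefl _)
      have h1 : τ ≤ ∑' k : S', x k := by
        have h2 := H (x g) (hpos g) hxgδ
        have h3 := sum_mono hpos hsum hsub
        linarith
      obtain ⟨A, hAS, hA⟩ := ih S' γ τ T' hS'δ hdom' hγ hτ h1 hT' hcard'
      exact ⟨A, fun k hk => (hAS hk).1, hA⟩

/-- Packaged density lemma. -/
lemma density (hpos : ∀ n, 0 < x n) (hsum : Summable x) {δ : ℝ} (hδ : 0 < δ)
    (H : ∀ v, 0 < v → v < δ → v ≤ ∑' k : {k | x k < v}, x k)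
    {γ τ : ℝ} (hγ : 0 < γ) (hτ : 0 ≤ τ) (hmass : τ ≤ ∑' k : {k | x k < δ}, x k) :
    ∃ A : Set ℕ, A ⊆ {k | x k < δ} ∧ (∑' k : A, x k) ∈ Set.Ioc (τ - γ) τ := by
  have hfin : {k | γ < x k ∧ x k < δ}.Finite :=
    (finite_big hsum hγ).subset (fun k hk => le_of_lt hk.1)
  refine density_aux hpos hsum H hfin.toFinset.card {k | x k < δ} γ τ hfin.toFinset
    (fun k hk => hk) (fun j hj k hkδ hk => absurd hkδ hk) hγ hτ hmass ?_ le_rfl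
  intro k
  simp only [Set.Finite.mem_toFinset, Set.mem_setOf_eq]
  tauto

/-- The set of subsums using only indices with `x k < δ`. -/
def ESmall (x : ℕ → ℝ) (δ : ℝ) : Set ℝ :=
  {t | ∃ A : Set ℕ, A ⊆ {k | x k < δ} ∧ t = ∑' k : A, x k}

lemma isClosed_ESmall (hpos : ∀ n, 0 < x n) (hsum : Summable x) (δ : ℝ) :
    IsClosed (ESmall x δ) := by
  classical
  set Small : Set ℕ := {k | x k < δ} with hSm
  set F : ℕ → (ℕ → Bool) → ℝ := fun k f => if f k = true then Small.indicator x k else 0 with hF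
  have hcont : ∀ k, Continuous (F k) := by
    intro k
    have h1 : Continuous fun f : ℕ → Bool => f k := continuous_apply k
    have h2 : Continuous fun b : Bool => if b = true then Small.indicator x k else 0 :=
      continuous_of_discreteTopology
    exact h2.comp h1
  have hbound : ∀ k (f : ℕ → Bool), ‖F k f‖ ≤ Small.indicator x k := by
    intro k f
    rw [hF]
    by_cases h : f k = true
    · simp only [if_pos h, Real.norm_eq_abs]
      rw [abs_of_nonneg (Set.indicator_nonneg (fun n _ => (hpos n).le) k)]
    · simp only [if_neg h, norm_zero]
      exact Set.indicator_nonneg (fun n _ => (hpos n).le) k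
  have hPhi : Continuous fun f : ℕ → Bool => ∑' k, F k f :=
    continuous_tsum hcont (hsum.indicator Small) hbound
  have hrange : (Set.range fun f : ℕ → Bool => ∑' k, F k f) = ESmall x δ := by
    ext t
    constructor
    · rintro ⟨f, rfl⟩
      refine ⟨{k | f k = true ∧ x k < δ}, fun k hk => hk.2, ?_⟩
      rw [tsub]
      refine tsum_congr (fun k => ?_)
      by_cases h1 : f k = true
      · by_cases h2 : x k < δ
        · rw [Set.indicator_of_mem (show k ∈ {k | f k = true ∧ x k < δ} from ⟨h1, h2⟩), hF]
          simp only [if_pos h1]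
          rw [Set.indicator_of_mem (show k ∈ Small from h2)]
        · rw [Set.indicator_of_notMem (show k ∉ _ from fun hc => h2 hc.2), hF]
          simp only [if_pos h1]
          rw [Set.indicator_of_notMem (show k ∉ Small from h2)]
      · rw [Set.indicator_of_notMem (show k ∉ _ from fun hc => h1 hc.1), hF]
        simp only [if_neg h1]
    · rintro ⟨A, hA, rfl⟩
      refine ⟨fun k => if k ∈ A then true else false, ?_⟩
      rw [tsub]
      refine tsum_congr (fun k => ?_)
      by_cases h : k ∈ A
      · rw [Set.indicator_of_mem h]
        show (if (if k ∈ A then true else false) = true then Small.indicator x k else 0) = x k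
        rw [if_pos h, if_pos rfl, Set.indicator_of_mem (hA h)]
      · rw [Set.indicator_of_notMem h]
        show (if (if k ∈ A then true else false) = true then Small.indicator x k else 0) = (0:ℝ)
        rw [if_neg h]
        simp
  rw [← hrange]
  exact (isCompact_range hPhi).isClosed

lemma interval_sub_ESmall (hpos : ∀ n, 0 < x n) (hsum : Summable x) {δ : ℝ} (hδ : 0 < δ)
    (H : ∀ v, 0 < v → v < δ → v ≤ ∑' k : {k | x k < v}, x k) :
    Set.Icc 0 (∑' k : {k | x k < δ}, x k) ⊆ ESmall x δ := by
  intro t ht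
  have hseq : ∀ n : ℕ, ∃ a : ℝ, a ∈ ESmall x δ ∧ t - 1/(n+1) < a ∧ a ≤ t := by
    intro n
    have hn : (0:ℝ) < 1/(n+1) := by positivity
    obtain ⟨A, hA, h1, h2⟩ := density hpos hsum hδ H hn ht.1 ht.2
    exact ⟨∑' k : A, x k, ⟨A, hA, rfl⟩, h1, h2⟩
  choose a ha h1 h2 using hseq
  have htend : Filter.Tendsto a Filter.atTop (nhds t) := by
    have hlow : Filter.Tendsto (fun n : ℕ => t - 1/(n+1)) Filter.atTop (nhds t) := by
      have := tendsto_one_div_add_atTop_nhds_zero_nat (𝕜 := ℝ)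
      have h := (tendsto_const_nhds (x := t) (f := Filter.atTop (α := ℕ))).sub this
      simpa using h
    exact tendsto_of_tendsto_of_tendsto_of_le_of_le hlow tendsto_const_nhds
      (fun n => (h1 n).le) h2
  exact (isClosed_ESmall hpos hsum δ).mem_of_tendsto htend
    (Filter.Eventually.of_forall ha)

/-- Decomposition: every subsum lies in one of finitely many intervals. -/
lemma decomp_sub (hpos : ∀ n, 0 < x n) (hsum : Summable x) {δ : ℝ} (hδ : 0 < δ) :
    achSet x ⊆ ⋃ F ∈ (finite_big hsum hδ).toFinset.powerset,
      Set.Icc (∑ k ∈ F, x k) ((∑ k ∈ F, x k) + ∑' k : {k | x k < δ}, x k) := by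
  rintro t ⟨A, rfl⟩
  set Small : Set ℕ := {k | x k < δ} with hSm
  set Big : Set ℕ := {k | δ ≤ x k} with hBg
  have hABfin : (A ∩ Big).Finite := (finite_big hsum hδ).subset Set.inter_subset_right
  set Ff : Finset ℕ := hABfin.toFinset with hFf
  have hsplit : A = (A ∩ Big) ∪ (A ∩ Small) := by
    ext k
    simp only [Set.mem_union, Set.mem_inter_iff, hBg, hSm, Set.mem_setOf_eq]
    rcases le_or_gt δ (x k) with h | h
    · tauto
    · tauto
  have hdisj : Disjoint (A ∩ Big) (A ∩ Small) := by
    rw [Set.disjoint_iff]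
    rintro k ⟨⟨_, h1⟩, ⟨_, h2⟩⟩
    exact absurd (show x k < δ from h2) (not_lt.mpr h1)
  have hsum_split : (∑' k : A, x k) = (∑' k : (A ∩ Big : Set ℕ), x k) + ∑' k : (A ∩ Small : Set ℕ), x k := by
    conv_lhs => rw [hsplit]
    exact union_sum hsum hdisj
  have hfin_sum : (∑' k : (A ∩ Big : Set ℕ), x k) = ∑ k ∈ Ff, x k := by
    have hEq : (A ∩ Big : Set ℕ) = (↑Ff : Set ℕ) := hABfin.coe_toFinset.symm
    rw [hEq, Finset.tsum_subtype' Ff x]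
  have he1 : 0 ≤ ∑' k : (A ∩ Small : Set ℕ), x k := sum_nonneg' hpos _
  have he2 : (∑' k : (A ∩ Small : Set ℕ), x k) ≤ ∑' k : Small, x k :=
    sum_mono hpos hsum Set.inter_subset_right
  refine Set.mem_iUnion₂.mpr ⟨Ff, ?_, ?_⟩
  · rw [Finset.mem_powerset]
    intro k hk
    rw [hFf, Set.Finite.mem_toFinset] at hk
    rw [Set.Finite.mem_toFinset]
    exact hk.2
  · rw [hsum_split, hfin_sum]
    constructor
    · linarith
    · linarith

/-- Each interval of the decomposition is contained in the achievement set. -/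
lemma decomp_sup (hpos : ∀ n, 0 < x n) (hsum : Summable x) {δ : ℝ} (hδ : 0 < δ)
    (H : ∀ v, 0 < v → v < δ → v ≤ ∑' k : {k | x k < v}, x k)
    {F : Finset ℕ} (hF : F ∈ (finite_big hsum hδ).toFinset.powerset) :
    Set.Icc (∑ k ∈ F, x k) ((∑ k ∈ F, x k) + ∑' k : {k | x k < δ}, x k) ⊆ achSet x := by
  rintro t ⟨ht1, ht2⟩
  set c : ℝ := ∑ k ∈ F, x k with hc
  have hFB : ∀ k ∈ F, δ ≤ x k := by
    intro k hk
    have := Finset.mem_powerset.mp hF hk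
    rwa [Set.Finite.mem_toFinset] at this
  have he : t - c ∈ Set.Icc 0 (∑' k : {k | x k < δ}, x k) := ⟨by linarith, by linarith⟩
  obtain ⟨Ae, hAe, hAesum⟩ := interval_sub_ESmall hpos hsum hδ H he
  have hdisj : Disjoint (↑F : Set ℕ) Ae := by
    rw [Set.disjoint_iff]
    rintro k ⟨h1, h2⟩
    exact absurd (hAe h2) (not_lt.mpr (hFB k h1))
  refine ⟨(↑F : Set ℕ) ∪ Ae, ?_⟩
  rw [union_sum hsum hdisj, Finset.tsum_subtype' F x, ← hAesum, ← hc]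
  ring

section GN

lemma gn_pos : ∀ n, 0 < gnSeq n := by
  intro n
  unfold gnSeq
  split <;> positivity

lemma gn_le (n : ℕ) : gnSeq n ≤ 3 * (1/2)^n := by
  have h1 : ((4:ℝ))^(n/2+1) = 2^(2*(n/2)+2) := by
    rw [show (4:ℝ) = 2^2 by norm_num, ← pow_mul]
    ring_nf
  have h2 : (2:ℝ)^n ≤ 2^(2*(n/2)+2) := pow_le_pow_right₀ one_le_two (by omega)
  have h3 : (0:ℝ) < 2^n := by positivity
  have h4 : (0:ℝ) < 2^(2*(n/2)+2) := by positivity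
  have key : (3:ℝ) / 4^(n/2+1) ≤ 3 * (1/2)^n := by
    rw [h1, one_div_pow, mul_one_div]
    exact div_le_div_of_nonneg_left (by norm_num) h3 h2
  unfold gnSeq
  split
  · exact key
  · refine le_trans ?_ key
    exact (div_le_div_iff_of_pos_right (by positivity)).mpr (by norm_num)

lemma gn_summable : Summable gnSeq := by
  refine Summable.of_nonneg_of_le (fun n => (gn_pos n).le) gn_le ?_
  exact (summable_geometric_of_lt_one (by norm_num) (by norm_num)).mul_left 3

lemma gn_even (k : ℕ) : gnSeq (2*k) = (1/4)^k * (3/4) := by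
  unfold gnSeq
  rw [if_pos (Nat.mul_mod_right 2 k), Nat.mul_div_cancel_left k (by norm_num)]
  rw [pow_succ, one_div_pow, div_mul_div_comm, one_mul, mul_comm]

lemma gn_odd (k : ℕ) : gnSeq (2*k+1) = (1/4)^k * (2/4) := by
  unfold gnSeq
  have h1 : (2*k+1) % 2 = 1 := by omega
  have h2 : (2*k+1) / 2 = k := by omega
  rw [h1, h2, if_neg one_ne_zero]
  rw [pow_succ, one_div_pow, div_mul_div_comm, one_mul, mul_comm]

lemma gn_total : ∑' n, gnSeq n = 5/3 := by
  have he : Summable fun k => gnSeq (2*k) := by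
    have : (fun k => gnSeq (2*k)) = fun k => (1/4:ℝ)^k * (3/4) := funext gn_even
    rw [this]
    exact (summable_geometric_of_lt_one (by norm_num) (by norm_num)).mul_right _
  have ho : Summable fun k => gnSeq (2*k+1) := by
    have : (fun k => gnSeq (2*k+1)) = fun k => (1/4:ℝ)^k * (2/4) := funext gn_odd
    rw [this]
    exact (summable_geometric_of_lt_one (by norm_num) (by norm_num)).mul_right _
  rw [← tsum_even_add_odd he ho]
  have h1 : ∑' k, gnSeq (2*k) = 1 := by
    rw [funext gn_even, tsum_mul_right, tsum_geometric_of_lt_one (by norm_num) (by norm_num)]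
    norm_num
  have h2 : ∑' k, gnSeq (2*k+1) = 2/3 := by
    rw [funext gn_odd, tsum_mul_right, tsum_geometric_of_lt_one (by norm_num) (by norm_num)]
    norm_num
  rw [h1, h2]
  norm_num

lemma gn_shift (n m : ℕ) : gnSeq (n + 2*m) = gnSeq n * (1/4)^m := by
  have h1 : (n + 2*m) % 2 = n % 2 := by omega
  have h2 : (n + 2*m) / 2 = n/2 + m := by omega
  unfold gnSeq
  rw [h1, h2]
  have h3 : (4:ℝ)^(n/2 + m + 1) = 4^(n/2+1) * 4^m := by
    rw [← pow_add]
    ring_nf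
  split
  · rw [h3, one_div_pow, div_mul_div_comm, mul_one]
  · rw [h3, one_div_pow, div_mul_div_comm, mul_one]

def shiftEquiv (m : ℕ) : ℕ ≃ {n : ℕ | 2*m ≤ n} where
  toFun n := ⟨n + 2*m, by simp⟩
  invFun p := p.1 - 2*m
  left_inv n := by simp
  right_inv p := Subtype.ext (by
    have h := p.2
    simp only [Set.mem_setOf_eq] at h
    show (↑p - 2*m) + 2*m = ↑p
    omega)

lemma gn_tail (m : ℕ) : ∑' k : {n : ℕ | 2*m ≤ n}, gnSeq k = (5/3) * (1/4)^m := by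
  have key : ∑' (c : ℕ), gnSeq (c + 2*m) = ∑' k : {n : ℕ | 2*m ≤ n}, gnSeq ↑k :=
    (shiftEquiv m).tsum_eq (fun p => gnSeq ↑p)
  rw [← key]
  calc ∑' (c : ℕ), gnSeq (c + 2*m) = ∑' n, gnSeq n * (1/4)^m :=
        tsum_congr (fun n => gn_shift n m)
    _ = (5/3) * (1/4)^m := by rw [tsum_mul_right, gn_total]

lemma gn_mem (m : ℕ) : (2:ℝ) * (1/4)^(m+1) ∈ achSet gnSeq := by
  refine ⟨{2*m+1}, ?_⟩
  rw [UniqCantorval.singleton_sum gnSeq (2*m+1), gn_odd]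
  rw [pow_succ]
  ring

lemma gn_gap (m : ℕ) {t : ℝ} (ht : t ∈ achSet gnSeq) :
    t ∉ Set.Ioo ((5/3) * (1/4)^(m+1)) (2 * (1/4)^(m+1)) := by
  rintro ⟨h1, h2⟩
  obtain ⟨A, rfl⟩ := ht
  by_cases hex : ∃ n ∈ A, n < 2*(m+1)
  · obtain ⟨n, hnA, hn⟩ := hex
    have hle : gnSeq n ≤ ∑' k : A, gnSeq k := UniqCantorval.elem_le gn_pos gn_summable hnA
    have hlow : (2:ℝ) * (1/4)^(m+1) ≤ gnSeq n := by
      have hd : n/2 + 1 ≤ m + 1 := by omega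
      have hp : (4:ℝ)^(n/2+1) ≤ 4^(m+1) := pow_le_pow_right₀ (by norm_num) hd
      have : (2:ℝ) / 4^(m+1) ≤ 2 / 4^(n/2+1) :=
        div_le_div_of_nonneg_left (by norm_num) (by positivity) hp
      have h24 : (2:ℝ) * (1/4)^(m+1) = 2 / 4^(m+1) := by
        rw [one_div_pow, mul_one_div]
      rw [h24]
      refine le_trans this ?_
      unfold gnSeq
      split
      · exact (div_le_div_iff_of_pos_right (by positivity)).mpr (by norm_num)
      · exact le_refl _
    linarith
  · push_neg at hex
    have hsub : A ⊆ {n : ℕ | 2*(m+1) ≤ n} := fun n hn => hex n hn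
    have := UniqCantorval.sum_mono gn_pos gn_summable hsub
    rw [gn_tail (m+1)] at this
    linarith
end GN

end UniqCantorval

open UniqCantorval

theorem uniqSet_infinite_of_cantorval (x : ℕ → ℝ) (hpos : ∀ n, 0 < x n) (hsum : Summable x)
    (hC : IsCantorval (achSet x)) :
    (uniqSet x).Infinite := by
  classical
  by_contra hinf
  rw [Set.not_infinite] at hinf
  -- choose δ below all positive unique points
  obtain ⟨δ, hδpos, hUδ⟩ : ∃ δ : ℝ, 0 < δ ∧ ∀ t, t ∈ uniqSet x → ¬ (0 < t ∧ t < δ) := by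
    have hVfin : {t ∈ uniqSet x | 0 < t}.Finite := hinf.subset (Set.sep_subset _ _)
    by_cases hne : hVfin.toFinset.Nonempty
    · refine ⟨hVfin.toFinset.min' hne, ?_, ?_⟩
      · have := hVfin.toFinset.min'_mem hne
        rw [Set.Finite.mem_toFinset] at this
        exact this.2
      · rintro t ht ⟨ht0, htδ⟩
        have : t ∈ hVfin.toFinset := by
          rw [Set.Finite.mem_toFinset]; exact ⟨ht, ht0⟩
        exact absurd (hVfin.toFinset.min'_le t this) (not_le.mpr htδ)
    · refine ⟨1, one_pos, ?_⟩
      rintro t ht ⟨ht0, _⟩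
      exact hne ⟨t, by rw [Set.Finite.mem_toFinset]; exact ⟨ht, ht0⟩⟩
  have H : ∀ v, 0 < v → v < δ → v ≤ ∑' k : {k | x k < v}, x k :=
    fun v hv0 hvδ => no_blocking hpos hsum hUδ hv0 hvδ
  obtain ⟨h⟩ := hC
  set P : Finset (Finset ℕ) := (finite_big hsum hδpos).toFinset.powerset with hP
  set ρ : ℝ := ∑' k : {k | x k < δ}, x k with hρ
  set N : ℕ := P.card with hN
  -- the GN points and their preimages
  set p : ℕ → ℝ := fun m => 2 * (1/4)^(m+1) with hp
  have hpmem : ∀ m : ℕ, p m ∈ achSet gnSeq := fun m => gn_mem m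
  set q : Fin (N+1) → ↥(achSet x) := fun i => h.symm ⟨p i, hpmem i⟩ with hq
  have hchoice : ∀ i : Fin (N+1), ∃ F, F ∈ P ∧
      (q i : ℝ) ∈ Set.Icc (∑ k ∈ F, x k) ((∑ k ∈ F, x k) + ρ) := by
    intro i
    have := decomp_sub hpos hsum hδpos (q i).2
    rw [Set.mem_iUnion₂] at this
    obtain ⟨F, hF, hmem⟩ := this
    exact ⟨F, hF, hmem⟩
  choose F hFP hFmem using hchoice
  -- pigeonhole
  obtain ⟨i, j, hij, hFeq'⟩ :=
    Fintype.exists_ne_map_eq_of_card_lt (fun i : Fin (N+1) => (⟨F i, hFP i⟩ : {G // G ∈ P}))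
      (by rw [Fintype.card_coe, Fintype.card_fin]; omega)
  have hFeq : F i = F j := congrArg Subtype.val hFeq'
  -- order the two levels
  have hvij : (i : ℕ) ≠ (j : ℕ) := fun hc => hij (Fin.ext hc)
  obtain ⟨a, b, hab, hFab⟩ : ∃ a b : Fin (N+1), (a : ℕ) < (b : ℕ) ∧ F a = F b := by
    rcases lt_or_gt_of_ne hvij with hlt | hgt
    · exact ⟨i, j, hlt, hFeq⟩
    · exact ⟨j, i, hgt, hFeq.symm⟩
  -- the connected image
  set c : ℝ := ∑ k ∈ F a, x k with hc
  set I : Set ℝ := Set.Icc c (c + ρ) with hI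
  have hIE : I ⊆ achSet x := decomp_sup hpos hsum hδpos H (hFP a)
  haveI : PreconnectedSpace ↥I := Subtype.preconnectedSpace isPreconnected_Icc
  set φ : ↥I → ℝ := fun w => ↑(h (Set.inclusion hIE w)) with hφdef
  have hφ : Continuous φ :=
    continuous_subtype_val.comp (h.continuous.comp (continuous_inclusion hIE))
  have hT : IsPreconnected (Set.range φ) := isPreconnected_range hφ
  have hmemT : ∀ d : Fin (N+1), F d = F a → p d ∈ Set.range φ := by
    intro d hd
    have hqdI : ((q d : ℝ)) ∈ I := by rw [hI, hc, ← hd]; exact hFmem d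
    refine ⟨⟨(q d : ℝ), hqdI⟩, ?_⟩
    have h1 : Set.inclusion hIE ⟨(q d : ℝ), hqdI⟩ = q d :=
      Subtype.ext rfl
    rw [hφdef]
    show ↑(h (Set.inclusion hIE _)) = p d
    rw [h1, hq]
    show ↑(h (h.symm ⟨p d, hpmem d⟩)) = p d
    rw [h.apply_symm_apply]
  have hpa : p a ∈ Set.range φ := hmemT a rfl
  have hpb : p b ∈ Set.range φ := hmemT b hFab.symm
  have hTgn : Set.range φ ⊆ achSet gnSeq := by
    rintro z ⟨w, rfl⟩
    exact (h (Set.inclusion hIE w)).2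
  -- the gap point
  set t : ℝ := (1/4)^((a:ℕ)+1) with htdef
  have ht0 : 0 < t := by rw [htdef]; positivity
  set z : ℝ := (11/6) * t with hz
  have hzmem : z ∈ Set.Icc (p b) (p a) := by
    constructor
    · have hpow : (1/4:ℝ)^((b:ℕ)+1) ≤ (1/4)^((a:ℕ)+2) :=
        pow_le_pow_of_le_one (by norm_num) (by norm_num) (by omega)
      have h2 : ((1:ℝ)/4)^((a:ℕ)+2) = t * (1/4) := by rw [htdef, pow_succ]
      rw [hp, hz]
      simp only []
      nlinarith
    · rw [hp, hz]
      simp only []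
      nlinarith
  have hzT : z ∈ Set.range φ := hT.Icc_subset hpb hpa hzmem
  have hzgn : z ∈ achSet gnSeq := hTgn hzT
  refine gn_gap (a : ℕ) hzgn ⟨?_, ?_⟩
  · rw [hz, htdef]; nlinarith
  · rw [hz, htdef]; nlinarith
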